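/- Let e₀ be a positive integer, N a positive real number, and ε a real number with 0 ≤ ε < 1/p. Write B(k) = ⌊k/p⌋ + 1 - ⌊log_p(k·e₀)⌋. Let c, c̃ : ℕ → ℚ_p be sequences such that for all k ≥ 1: v_p(c_k) ≥ B(k), v_p(c̃_k) ≥ B(k), and ‖c_k - c̃_k‖_p ≤ p^{-N}. Let u ∈ K satisfy ‖u‖ ≤ p^{ε}. Then the series Σ_{k≥1} c_k·u^k and Σ_{k≥1} c̃_k·u^k both converge in K, and for any real number ν such that ν ≤ max(N, B(k)) - k·ε for all k ≥ 1, one has ‖ Σ_{k≥1} c_k·u^k − Σ_{k≥1} c̃_k·u^k ‖ ≤ p^{-ν}. -/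

import Mathlib

set_option maxHeartbeats 1000000 in
/-- Precision loss when evaluating the overconvergent functions at a finite bad point:
with `B(k) = ⌊k/p⌋ + 1 - ⌊log_p(k e₀)⌋`, coefficients `c, c'` of valuation at least `B(k)`
agreeing to precision `N`, and `‖u‖ ≤ p^ε` with `0 ≤ ε < 1/p`, both series `Σ_{k≥1} c_k u^k`
and `Σ_{k≥1} c'_k u^k` converge and their sums differ by at most `p^{-ν}` for any
`ν ≤ max(N, B(k)) - kε` (all `k ≥ 1`). -/
theorem overconvergent_evaluation_precision {p : ℕ} [Fact p.Prime] {K : Type*}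
    [NormedField K] [CompleteSpace K] [Algebra ℚ_[p] K]
    (hna : ∀ x y : K, ‖x + y‖ ≤ max ‖x‖ ‖y‖)
    (hiso : ∀ a : ℚ_[p], ‖algebraMap ℚ_[p] K a‖ = ‖a‖)
    (e₀ : ℕ) (he₀ : 0 < e₀) (N : ℝ) (hN : 0 < N)
    (ε : ℝ) (hε0 : 0 ≤ ε) (hε : ε < 1 / p)
    (B : ℕ → ℤ) (hB : ∀ k : ℕ, B k = ((k / p : ℕ) : ℤ) + 1 - (Nat.log p (k * e₀) : ℤ))
    (c c' : ℕ → ℚ_[p])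
    (hc : ∀ k : ℕ, 1 ≤ k → ‖c k‖ ≤ (p : ℝ) ^ (-(B k)))
    (hc' : ∀ k : ℕ, 1 ≤ k → ‖c' k‖ ≤ (p : ℝ) ^ (-(B k)))
    (hcc' : ∀ k : ℕ, 1 ≤ k → ‖c k - c' k‖ ≤ (p : ℝ) ^ (-N))
    (u : K) (hu : ‖u‖ ≤ (p : ℝ) ^ ε) :
    Summable (fun k : ℕ => algebraMap ℚ_[p] K (c (k + 1)) * u ^ (k + 1)) ∧
    Summable (fun k : ℕ => algebraMap ℚ_[p] K (c' (k + 1)) * u ^ (k + 1)) ∧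
    ∀ ν : ℝ, (∀ k : ℕ, 1 ≤ k → ν ≤ max N ((B k : ℝ)) - (k : ℝ) * ε) →
      ‖(∑' k : ℕ, algebraMap ℚ_[p] K (c (k + 1)) * u ^ (k + 1)) -
          ∑' k : ℕ, algebraMap ℚ_[p] K (c' (k + 1)) * u ^ (k + 1)‖ ≤ (p : ℝ) ^ (-ν) := by
  haveI : IsUltrametricDist K :=
    IsUltrametricDist.isUltrametricDist_of_forall_norm_add_le_max_norm hna
  have hp1 : (1 : ℝ) < (p : ℝ) := by exact_mod_cast (Fact.out : p.Prime).one_lt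
  have hp0 : (0 : ℝ) < (p : ℝ) := by linarith
  have hppos : 0 < p := (Fact.out : p.Prime).pos
  have hu0 : (0 : ℝ) ≤ ‖u‖ := norm_nonneg u
  -- norm of u^k
  have hupow : ∀ k : ℕ, ‖u ^ k‖ ≤ (p : ℝ) ^ ((k : ℝ) * ε) := by
    intro k
    rw [norm_pow]
    calc ‖u‖ ^ k ≤ ((p : ℝ) ^ ε) ^ k := pow_le_pow_left₀ hu0 hu k
      _ = (p : ℝ) ^ ((k : ℝ) * ε) := by
          rw [← Real.rpow_natCast ((p : ℝ) ^ ε) k, ← Real.rpow_mul hp0.le, mul_comm]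
  -- the generic term bound
  have key : ∀ k : ℕ, 1 ≤ k → ∀ a : ℚ_[p], ‖a‖ ≤ (p : ℝ) ^ (-(B k)) →
      ‖algebraMap ℚ_[p] K a * u ^ k‖ ≤ (k : ℝ) * e₀ * ((p : ℝ) ^ (ε - 1 / p)) ^ k := by
    intro k hk a ha
    rw [norm_mul, hiso]
    have hBk : (p : ℝ) ^ (-(B k)) = (p : ℝ) ^ ((-(B k) : ℤ) : ℝ) := (Real.rpow_intCast _ _).symm
    calc ‖a‖ * ‖u ^ k‖ ≤ (p : ℝ) ^ ((-(B k) : ℤ) : ℝ) * (p : ℝ) ^ ((k : ℝ) * ε) := by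
          apply mul_le_mul (hBk ▸ ha) (hupow k) (norm_nonneg _) (Real.rpow_nonneg hp0.le _)
      _ = (p : ℝ) ^ (((-(B k) : ℤ) : ℝ) + (k : ℝ) * ε) := (Real.rpow_add hp0 _ _).symm
      _ ≤ (k : ℝ) * e₀ * ((p : ℝ) ^ (ε - 1 / p)) ^ k := by
          -- -(B k) = log - k/p - 1
          have hBe' : (-(B k) : ℤ) =
              (Nat.log p (k * e₀) : ℤ) - ((k / p : ℕ) : ℤ) - 1 := by rw [hB k]; ring
          have hBe : ((-(B k) : ℤ) : ℝ) =
              (Nat.log p (k * e₀) : ℝ) - ((k / p : ℕ) : ℝ) - 1 := by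
            rw [hBe']
            simp only [Int.cast_sub, Int.cast_natCast, Int.cast_one]
          -- ⌊k/p⌋ ≥ k/p - 1
          have hfloor : (k : ℝ) / p - 1 ≤ ((k / p : ℕ) : ℝ) := by
            have h1 : p * (k / p) + k % p = k := Nat.div_add_mod k p
            have h2 : k % p < p := Nat.mod_lt k hppos
            have h3 : (p : ℝ) * ((k / p : ℕ) : ℝ) + ((k % p : ℕ) : ℝ) = (k : ℝ) := by
              exact_mod_cast h1
            have h4 : ((k % p : ℕ) : ℝ) < (p : ℝ) := by exact_mod_cast h2
            rw [sub_le_iff_le_add, div_le_iff₀ hp0]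
            nlinarith
          have hexp : ((-(B k) : ℤ) : ℝ) + (k : ℝ) * ε ≤
              (Nat.log p (k * e₀) : ℝ) + (k : ℝ) * (ε - 1 / p) := by
            rw [hBe]
            have : (k : ℝ) * (1 / p) = (k : ℝ) / p := by ring
            nlinarith
          calc (p : ℝ) ^ (((-(B k) : ℤ) : ℝ) + (k : ℝ) * ε)
              ≤ (p : ℝ) ^ ((Nat.log p (k * e₀) : ℝ) + (k : ℝ) * (ε - 1 / p)) :=
                Real.rpow_le_rpow_of_exponent_le hp1.le hexp
            _ = (p : ℝ) ^ (Nat.log p (k * e₀) : ℝ) * (p : ℝ) ^ ((k : ℝ) * (ε - 1 / p)) :=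
                Real.rpow_add hp0 _ _
            _ ≤ ((k : ℝ) * e₀) * ((p : ℝ) ^ (ε - 1 / p)) ^ k := by
                apply mul_le_mul
                · rw [Real.rpow_natCast]
                  have hne : k * e₀ ≠ 0 := by positivity
                  have := Nat.pow_log_le_self p hne
                  calc ((p : ℝ) ^ Nat.log p (k * e₀)) ≤ ((k * e₀ : ℕ) : ℝ) := by
                        exact_mod_cast this
                    _ = (k : ℝ) * e₀ := by push_cast; ring
                · rw [← Real.rpow_natCast ((p : ℝ) ^ (ε - 1 / p)) k,
                    ← Real.rpow_mul hp0.le, mul_comm]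
                · exact Real.rpow_nonneg hp0.le _
                · positivity
  -- summability of the comparison series
  set r : ℝ := (p : ℝ) ^ (ε - 1 / p) with hr
  have hr0 : 0 < r := Real.rpow_pos_of_pos hp0 _
  have hr1 : r < 1 := by
    rw [hr]
    calc (p : ℝ) ^ (ε - 1 / p) < (p : ℝ) ^ (0 : ℝ) :=
      Real.rpow_lt_rpow_of_exponent_lt hp1 (by linarith)
    _ = 1 := Real.rpow_zero _
  have hgeom : Summable (fun k : ℕ => ((k : ℝ) + 1) * e₀ * r ^ (k + 1)) := by
    have h0 : Summable (fun n : ℕ => (n : ℝ) ^ 1 * r ^ n) :=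
      summable_pow_mul_geometric_of_norm_lt_one 1 (by rwa [Real.norm_eq_abs, abs_of_pos hr0])
    have h1 : Summable (fun n : ℕ => ((n + 1 : ℕ) : ℝ) ^ 1 * r ^ (n + 1)) :=
      (summable_nat_add_iff 1).mpr h0
    have h2 := h1.mul_right (e₀ : ℝ)
    apply h2.congr
    intro n
    push_cast
    ring
  have hsum : ∀ d : ℕ → ℚ_[p], (∀ k : ℕ, 1 ≤ k → ‖d k‖ ≤ (p : ℝ) ^ (-(B k))) →
      Summable (fun k : ℕ => algebraMap ℚ_[p] K (d (k + 1)) * u ^ (k + 1)) := by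
    intro d hd
    apply Summable.of_norm_bounded hgeom
    intro k
    have := key (k + 1) (by omega) (d (k + 1)) (hd (k + 1) (by omega))
    calc ‖algebraMap ℚ_[p] K (d (k + 1)) * u ^ (k + 1)‖
        ≤ ((k + 1 : ℕ) : ℝ) * e₀ * r ^ (k + 1) := this
      _ = ((k : ℝ) + 1) * e₀ * r ^ (k + 1) := by push_cast; ring
  have hs1 := hsum c hc
  have hs2 := hsum c' hc'
  refine ⟨hs1, hs2, ?_⟩
  intro ν hν
  rw [← Summable.tsum_sub hs1 hs2]
  have hC0 : (0 : ℝ) ≤ (p : ℝ) ^ (-ν) := Real.rpow_nonneg hp0.le _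
  apply IsUltrametricDist.norm_tsum_le_of_forall_le_of_nonneg hC0
  intro k
  rw [← sub_mul, ← map_sub, norm_mul, hiso]
  set m := k + 1 with hm
  have hm1 : 1 ≤ m := by omega
  -- ‖c m - c' m‖ ≤ p ^ (-max N (B m))
  have hd : ‖c m - c' m‖ ≤ (p : ℝ) ^ (-(max N ((B m : ℝ)))) := by
    rcases max_cases N ((B m : ℝ)) with ⟨hmax, _⟩ | ⟨hmax, _⟩
    · rw [hmax]; exact hcc' m hm1
    · rw [hmax]
      have h1 : ‖c m - c' m‖ ≤ max ‖c m‖ ‖c' m‖ := by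
        rw [sub_eq_add_neg]
        simpa using Padic.nonarchimedean (c m) (-(c' m))
      have h2 : (p : ℝ) ^ (-(B m)) = (p : ℝ) ^ (-((B m : ℝ))) := by
        rw [← Real.rpow_intCast]; push_cast; ring_nf
      exact h1.trans (by rw [← h2]; exact max_le (hc m hm1) (hc' m hm1))
  calc ‖c m - c' m‖ * ‖u ^ m‖
      ≤ (p : ℝ) ^ (-(max N ((B m : ℝ)))) * (p : ℝ) ^ ((m : ℝ) * ε) :=
        mul_le_mul hd (hupow m) (norm_nonneg _) (Real.rpow_nonneg hp0.le _)
    _ = (p : ℝ) ^ (-(max N ((B m : ℝ))) + (m : ℝ) * ε) := (Real.rpow_add hp0 _ _).symm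
    _ ≤ (p : ℝ) ^ (-ν) := by
        apply Real.rpow_le_rpow_of_exponent_le hp1.le
        have := hν m hm1
        linarith
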